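/- Let f : (0,1) → [0,∞) be a concave function. Then for every s ∈ (0,1), inf_{x ≥ 0} [ s·x + (1−s)·sup_{0<t<1} (−t·x + f(t))/(1−t) ] = inf_{x > 0} sup_{0<t<1} [ ((s−t)·x + (1−s)·f(t))/(1−t) ] = f(s). -/

import Mathlib

open Set

/-- The Appendix lemma on concave functions: for a nonnegative concave `f` on `(0,1)` and
`s ∈ (0,1)`,
`inf_{x ≥ 0} [s x + (1-s) sup_{0<t<1} (-t x + f(t))/(1-t)]
  = inf_{x > 0} sup_{0<t<1} ((s-t) x + (1-s) f(t))/(1-t) = f(s)`.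
The inner suprema are taken in `EReal` since they may be infinite. -/
lemma subgrad (f : ℝ → ℝ) (hf : ConcaveOn ℝ (Ioo 0 1) f) {s : ℝ} (hs : s ∈ Ioo (0:ℝ) 1) :
    ∃ c : ℝ, ∀ t ∈ Ioo (0:ℝ) 1, f t ≤ f s + c * (t - s) := by
  obtain ⟨hs0, hs1⟩ := hs
  set σ : ℝ → ℝ := fun b => (f b - f s) / (b - s) with hσ
  have key : ∀ a ∈ Ioo (0:ℝ) 1, ∀ b ∈ Ioo (0:ℝ) 1, a < s → s < b →
      σ b ≤ (f s - f a) / (s - a) := fun a ha b hb h1 h2 =>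
    hf.slope_anti_adjacent ha hb h1 h2
  have hamem : s/2 ∈ Ioo (0:ℝ) 1 := ⟨by linarith, by linarith⟩
  have hne : ((σ '' (Ioo s 1)).Nonempty) := ⟨σ ((s+1)/2), ⟨(s+1)/2, ⟨by linarith, by linarith⟩, rfl⟩⟩
  have hbdd : BddAbove (σ '' (Ioo s 1)) := by
    refine ⟨(f s - f (s/2)) / (s - s/2), ?_⟩
    rintro y ⟨b, ⟨hb1, hb2⟩, rfl⟩
    exact key _ hamem b ⟨lt_trans hs0 hb1, hb2⟩ (by linarith) hb1
  set c := sSup (σ '' (Ioo s 1)) with hc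
  refine ⟨c, fun t ht => ?_⟩
  obtain ⟨ht0, ht1⟩ := ht
  rcases lt_trichotomy t s with h | h | h
  · have hub : c ≤ (f s - f t) / (s - t) := by
      apply csSup_le hne
      rintro y ⟨b, ⟨hb1, hb2⟩, rfl⟩
      exact key t ⟨ht0, ht1⟩ b ⟨lt_trans hs0 hb1, hb2⟩ h hb1
    have hst : (0:ℝ) < s - t := by linarith
    rw [le_div_iff₀ hst] at hub
    nlinarith
  · simp [h]
  · have hle : σ t ≤ c := le_csSup hbdd ⟨t, ⟨h, ht1⟩, rfl⟩
    have hst : (0:ℝ) < t - s := by linarith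
    rw [hσ] at hle
    simp only at hle
    rw [div_le_iff₀ hst] at hle
    linarith

lemma keyx (f : ℝ → ℝ) (hf : ConcaveOn ℝ (Ioo 0 1) f)
    (hnn : ∀ t ∈ Ioo (0:ℝ) 1, 0 ≤ f t) {s : ℝ} (hs : s ∈ Ioo (0:ℝ) 1)
    {ε : ℝ} (hε : 0 < ε) :
    ∃ x : ℝ, 0 < x ∧ ∀ t ∈ Ioo (0:ℝ) 1,
      ((s - t) * x + (1 - s) * f t) / (1 - t) ≤ f s + ε := by
  obtain ⟨hs0, hs1⟩ := hs
  obtain ⟨c, hc⟩ := subgrad f hf ⟨hs0, hs1⟩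
  set m := c + ε/2 with hm
  set x := f s + ε + m * (1 - s) with hx
  have hlin : ∀ t ∈ Ioo (0:ℝ) 1, f t ≤ f s + ε + m * (t - s) := by
    intro t ⟨ht0, ht1⟩
    have h1 := hc t ⟨ht0, ht1⟩
    rw [hm]
    nlinarith [mul_pos (half_pos hε) (show (0:ℝ) < t - s + 1 by linarith)]
  have hx0 : 0 ≤ f s + ε + c * (1 - s) := by
    by_contra hneg
    push_neg at hneg
    set x0 := f s + ε + c * (1 - s) with hx0d
    set η := min ((1-s)/2) ((-x0)/(2*(|c|+1))) with hη
    have habs : 0 ≤ |c| := abs_nonneg c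
    have hη1 : 0 < η := lt_min (by linarith) (div_pos (by linarith) (by positivity))
    have hη2 : η ≤ (1-s)/2 := min_le_left _ _
    have hη3 : η ≤ (-x0)/(2*(|c|+1)) := min_le_right _ _
    set t := 1 - η with ht
    have htm : t ∈ Ioo (0:ℝ) 1 := ⟨by linarith, by linarith⟩
    have h1 := hc t htm
    have h2 := hnn t htm
    have h3 : c * η ≤ (|c|+1) * η := by
      have := le_abs_self c
      nlinarith
    have h4 : (|c|+1) * η ≤ (-x0)/2 := by
      rw [le_div_iff₀ (by positivity : (0:ℝ) < 2*(|c|+1))] at hη3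
      nlinarith
    have h5 : f t ≤ x0 - c * η := by
      have : c * (t - s) = c * (1 - s) - c * η := by rw [ht]; ring
      linarith [h1, this.le]
    nlinarith [mul_le_mul_of_nonneg_right (neg_abs_le c) hη1.le]
  have hxpos : 0 < x := by
    rw [hx, hm]; nlinarith
  refine ⟨x, hxpos, fun t ht => ?_⟩
  obtain ⟨ht0, ht1⟩ := ht
  have h1t : (0:ℝ) < 1 - t := by linarith
  rw [div_le_iff₀ h1t]
  have hft := hlin t ⟨ht0, ht1⟩
  have h1s : (0:ℝ) < 1 - s := by linarith
  nlinarith [mul_le_mul_of_nonneg_left hft h1s.le]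

theorem stmt7 (f : ℝ → ℝ) (hf_concave : ConcaveOn ℝ (Ioo 0 1) f)
    (hf_nonneg : ∀ t ∈ Ioo (0 : ℝ) 1, 0 ≤ f t) (s : ℝ) (hs : s ∈ Ioo (0 : ℝ) 1) :
    (⨅ x : {x : ℝ // 0 ≤ x}, (((s * (x : ℝ) : ℝ) : EReal) +
        ((1 - s : ℝ) : EReal) *
          ⨆ t : Ioo (0 : ℝ) 1, (((-(t : ℝ) * (x : ℝ) + f t) / (1 - (t : ℝ)) : ℝ) : EReal)))
      = ((f s : ℝ) : EReal) ∧
    (⨅ x : {x : ℝ // 0 < x}, ⨆ t : Ioo (0 : ℝ) 1,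
        ((((s - (t : ℝ)) * (x : ℝ) + (1 - s) * f t) / (1 - (t : ℝ)) : ℝ) : EReal))
      = ((f s : ℝ) : EReal) := by
  obtain ⟨hs0, hs1⟩ := hs
  have h1s : (0:ℝ) < 1 - s := by linarith
  have hcnn : (0:EReal) ≤ ((1 - s : ℝ) : EReal) := EReal.coe_nonneg.mpr h1s.le
  constructor
  · apply le_antisymm
    · refine le_of_forall_gt_imp_ge_of_dense fun a ha => ?_
      induction a using EReal.rec with
      | bot => exact absurd ha (by simp)
      | top => exact le_top
      | coe r =>
        have hr : f s < r := EReal.coe_lt_coe_iff.mp ha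
        have hε : (0:ℝ) < r - f s := by linarith
        obtain ⟨x, hx, hb⟩ := keyx f hf_concave hf_nonneg ⟨hs0, hs1⟩ hε
        refine iInf_le_of_le ⟨x, hx.le⟩ ?_
        have hsup : (⨆ t : Ioo (0 : ℝ) 1,
            (((-(t : ℝ) * x + f t) / (1 - (t : ℝ)) : ℝ) : EReal))
            ≤ (((r - s*x)/(1-s) : ℝ) : EReal) := by
          refine iSup_le fun t => EReal.coe_le_coe_iff.mpr ?_
          obtain ⟨t, ht⟩ := t
          have hb' := hb t ht
          have h1t : (0:ℝ) < 1 - t := by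
            obtain ⟨_, ht1⟩ := ht; linarith
          have hident : s*x + (1-s)*((-t*x + f t)/(1-t))
              = ((s-t)*x+(1-s)*f t)/(1-t) := by field_simp; ring
          rw [le_div_iff₀ h1s]
          have : f s + (r - f s) = r := by ring
          rw [this] at hb'
          nlinarith [hident, hb']
        calc ((s * x : ℝ) : EReal) + ((1 - s : ℝ) : EReal) *
              ⨆ t : Ioo (0 : ℝ) 1, (((-(t : ℝ) * x + f t) / (1 - (t : ℝ)) : ℝ) : EReal)
            ≤ ((s * x : ℝ) : EReal) + ((1 - s : ℝ) : EReal) * (((r - s*x)/(1-s) : ℝ) : EReal) :=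
              add_le_add_right (mul_le_mul_of_nonneg_left hsup hcnn) _
          _ = ((s*x + (1-s)*((r - s*x)/(1-s)) : ℝ) : EReal) := by
              norm_cast
          _ = ((r : ℝ) : EReal) := by
              congr 1
              field_simp
              ring
    · refine le_iInf fun x => ?_
      obtain ⟨x, hx⟩ := x
      have hterm : (((-s * x + f s) / (1 - s) : ℝ) : EReal)
          ≤ ⨆ t : Ioo (0 : ℝ) 1, (((-(t : ℝ) * x + f t) / (1 - (t : ℝ)) : ℝ) : EReal) :=
        le_iSup (fun t : Ioo (0:ℝ) 1 =>
          (((-(t : ℝ) * x + f t) / (1 - (t : ℝ)) : ℝ) : EReal)) ⟨s, hs0, hs1⟩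
      calc ((f s : ℝ) : EReal)
          = ((s*x + (1-s)*((-s*x + f s)/(1-s)) : ℝ) : EReal) := by
            congr 1
            field_simp
            ring
          _ = ((s * x : ℝ) : EReal) + ((1 - s : ℝ) : EReal) *
              (((-s * x + f s) / (1 - s) : ℝ) : EReal) := by
            norm_cast
          _ ≤ _ := add_le_add_right (mul_le_mul_of_nonneg_left hterm hcnn) _
  · apply le_antisymm
    · refine le_of_forall_gt_imp_ge_of_dense fun a ha => ?_
      induction a using EReal.rec with
      | bot => exact absurd ha (by simp)
      | top => exact le_top
      | coe r =>
        have hr : f s < r := EReal.coe_lt_coe_iff.mp ha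
        have hε : (0:ℝ) < r - f s := by linarith
        obtain ⟨x, hx, hb⟩ := keyx f hf_concave hf_nonneg ⟨hs0, hs1⟩ hε
        refine iInf_le_of_le ⟨x, hx⟩ ?_
        refine iSup_le fun t => EReal.coe_le_coe_iff.mpr ?_
        obtain ⟨t, ht⟩ := t
        have hb' := hb t ht
        linarith
    · refine le_iInf fun x => ?_
      obtain ⟨x, hx⟩ := x
      refine le_iSup_of_le ⟨s, hs0, hs1⟩ (EReal.coe_le_coe_iff.mpr ?_)
      have : ((s - s) * x + (1 - s) * f s) / (1 - s) = f s := by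
        field_simp
        ring
      rw [this]
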